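/- arXiv:1702.02611 — 2 statements merged into one kernel-verified Lean document; each statement's English description precedes it below -/
import Mathlib

section
/- Let m be a continuous topological partial action of a Polish group G on a Polish space X with G*X a G_δ subset of G × X. Then the orbit equivalence relation E^p_G is idealistic: there is an assignment C ↦ I_C of a σ-ideal I_C on subsets of each E^p_G-equivalence class C such that C ∉ I_C, and for every Borel A ⊆ X × X, the set A_I = {x : {y ∈ [x] : (x,y) ∈ A} ∈ I_{[x]}} is Borel. -/
open Set Topology Filter

section BaireAux

variable {α : Type*} [TopologicalSpace α]

theorem isGδ_preimage' {β : Type*} [TopologicalSpace β] {s : Set β} (hs : IsGδ s)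
    {f : α → β} (hf : Continuous f) : IsGδ (f ⁻¹' s) := by
  obtain ⟨T, hTo, hTc, rfl⟩ := hs
  rw [Set.preimage_sInter]
  exact IsGδ.biInter hTc fun t ht => ((hTo t ht).preimage hf).isGδ

theorem IsOpen.not_isMeagre' [BaireSpace α] {U : Set α} (hU : IsOpen U) (hne : U.Nonempty) :
    ¬ IsMeagre U := by
  intro h
  obtain ⟨w, hw1, hw2⟩ := (dense_iff_inter_open.1 (dense_of_mem_residual h)) U hU hne
  exact hw2 hw1

theorem IsMeagre.union' {s t : Set α} (hs : IsMeagre s) (ht : IsMeagre t) :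
    IsMeagre (s ∪ t) := by
  rw [IsMeagre, Set.compl_union]
  exact Filter.inter_mem hs ht

theorem Homeomorph.isMeagre_preimage {β : Type*} [TopologicalSpace β] (e : α ≃ₜ β)
    {s : Set β} : IsMeagre (e ⁻¹' s) ↔ IsMeagre s := by
  rw [IsMeagre, IsMeagre, ← e.residual_map_eq, Filter.mem_map, Set.preimage_compl]

/-- A `Gδ` subset of a Polish space is a Baire space. -/
theorem IsGδ.baireSpace_subtype [PolishSpace α] {s : Set α} (hs : IsGδ s) :
    BaireSpace ↥s := by
  constructor
  intro f ho hd
  have hW : ∀ n, ∃ W : Set α, IsOpen W ∧ f n = Subtype.val ⁻¹' W := by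
    intro n
    rcases isOpen_induced_iff.1 (ho n) with ⟨W, hWo, hWe⟩
    exact ⟨W, hWo, hWe.symm⟩
  choose W hWo hWe using hW
  obtain ⟨T, hTo, hTc, hseq⟩ := hs
  set C := closure s with hC
  haveI : PolishSpace ↥C := isClosed_closure.polishSpace
  haveI : BaireSpace ↥C := by
    letI := TopologicalSpace.upgradeIsCompletelyMetrizable ↥C
    infer_instance
  -- density facts in ↥C
  have hsubC : s ⊆ C := subset_closure
  have hdense_of_closure : ∀ M : Set α, C ⊆ closure M → M ⊆ C →
      Dense (Subtype.val ⁻¹' M : Set ↥C) := by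
    intro M hM hMC
    rw [dense_iff_inter_open]
    rintro U hU ⟨z, hz⟩
    rcases isOpen_induced_iff.1 hU with ⟨V, hVo, rfl⟩
    have hzM : (z : α) ∈ closure M := hM z.2
    obtain ⟨y, hyV, hyM⟩ := mem_closure_iff.1 hzM V hVo hz
    exact ⟨⟨y, hMC hyM⟩, hyV, hyM⟩
  have hdenseS : Dense (Subtype.val ⁻¹' s : Set ↥C) :=
    hdense_of_closure s subset_rfl hsubC
  have hdenseW : ∀ n, Dense (Subtype.val ⁻¹' (W n ∩ s) : Set ↥C) := by
    intro n
    apply hdense_of_closure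
    · -- C ⊆ closure (W n ∩ s)
      have h1 : s ⊆ closure (W n ∩ s) := by
        intro y hy
        have : (⟨y, hy⟩ : ↥s) ∈ closure (f n) := hd n _
        rw [hWe n] at this
        have := (closure_subtype).1 this
        refine closure_mono ?_ this
        rintro z ⟨t, ht, rfl⟩
        exact ⟨ht, t.2⟩
      calc C = closure s := rfl
        _ ⊆ closure (closure (W n ∩ s)) := closure_mono h1
        _ = closure (W n ∩ s) := closure_closure
    · exact fun y hy => hsubC hy.2
  -- the dense Gδ set in ↥C
  set D : Set ↥C := (Subtype.val ⁻¹' s) ∩ ⋂ n, Subtype.val ⁻¹' (W n ∩ s) with hD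
  have hDGδ : IsGδ (Subtype.val ⁻¹' s : Set ↥C) := by
    rw [hseq]
    exact isGδ_preimage' ⟨T, hTo, hTc, rfl⟩ continuous_subtype_val
  have hsGδ : IsGδ s := ⟨T, hTo, hTc, hseq⟩
  have hDdense : Dense D := by
    apply Dense.inter_of_Gδ hDGδ
    · exact IsGδ.iInter fun n =>
        isGδ_preimage' ((hWo n).isGδ.inter hsGδ) continuous_subtype_val
    · exact hdenseS
    · exact dense_iInter_of_Gδ (fun n =>
        isGδ_preimage' ((hWo n).isGδ.inter hsGδ) continuous_subtype_val) hdenseW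
  -- conclude density of ⋂ f n in ↥s
  rw [dense_iff_inter_open]
  rintro U hU ⟨z, hz⟩
  rcases isOpen_induced_iff.1 hU with ⟨V, hVo, rfl⟩
  -- z : ↥s with ↑z ∈ V
  have hzC : (z : α) ∈ C := hsubC z.2
  have hVne : ((Subtype.val ⁻¹' V : Set ↥C)).Nonempty := ⟨⟨z, hzC⟩, hz⟩
  obtain ⟨w, hwV, hwD⟩ := (dense_iff_inter_open.1 hDdense) (Subtype.val ⁻¹' V)
    (hVo.preimage continuous_subtype_val) hVne
  obtain ⟨hws, hwW⟩ := hwD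
  refine ⟨⟨(w : α), hws⟩, hwV, ?_⟩
  rw [Set.mem_iInter]
  intro n
  rw [hWe n]
  exact (Set.mem_iInter.1 hwW n).1

end BaireAux

structure PartialAction (G : Type*) (X : Type*) [Group G] where
  dom : G → Set X
  act : G → X → X
  mem_dom_one : ∀ x, x ∈ dom 1
  act_one : ∀ x, act 1 x = x
  mem_dom_inv : ∀ g x, x ∈ dom g → act g x ∈ dom g⁻¹
  act_inv_act : ∀ g x, x ∈ dom g → act g⁻¹ (act g x) = x
  mem_dom_mul : ∀ g h x, x ∈ dom h → act h x ∈ dom g → x ∈ dom (g * h)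
  act_mul : ∀ g h x, x ∈ dom h → act h x ∈ dom g → act (g * h) x = act g (act h x)

namespace PartialAction

variable {G X : Type*} [Group G]

/-- The orbit equivalence relation `E^p_G` of a partial action. -/
def orbitRel (pa : PartialAction G X) (x y : X) : Prop :=
  ∃ g, x ∈ pa.dom g ∧ pa.act g x = y

/-- `G^x = {g : G | g · x is defined}`. -/
def stabDom (pa : PartialAction G X) (x : X) : Set G := {g | x ∈ pa.dom g}

/-- The orbit equivalence relation of the partial action `\widehat m` on `G × X`,
`\widehat m_u (h, x) = (h u⁻¹, u · x)`. -/
def hatOrbitRel (pa : PartialAction G X) (p q : G × X) : Prop :=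
  ∃ u, p.2 ∈ pa.dom u ∧ q = (p.1 * u⁻¹, pa.act u p.2)

/-- Vaught transform `A^{△V}`. -/
def vaughtDelta [TopologicalSpace G] (pa : PartialAction G X) (A : Set X) (V : Set G) : Set X :=
  {x | ¬ IsMeagre {g : ↥(V ∩ pa.stabDom x) | pa.act (g : G) x ∈ A}}

/-- Vaught transform `A^{*V}`. -/
def vaughtStar [TopologicalSpace G] (pa : PartialAction G X) (A : Set X) (V : Set G) : Set X :=
  {x | {g : ↥(V ∩ pa.stabDom x) | pa.act (g : G) x ∈ A} ∈ residual ↥(V ∩ pa.stabDom x)}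

/- ### auxiliary lemmas -/

theorem orbitRel_refl (pa : PartialAction G X) (x : X) : pa.orbitRel x x :=
  ⟨1, pa.mem_dom_one x, pa.act_one x⟩

theorem orbitRel_symm (pa : PartialAction G X) {x y : X} (h : pa.orbitRel x y) :
    pa.orbitRel y x := by
  obtain ⟨g, hg, rfl⟩ := h
  exact ⟨g⁻¹, pa.mem_dom_inv g x hg, pa.act_inv_act g x hg⟩

theorem orbitRel_trans (pa : PartialAction G X) {x y z : X} (h1 : pa.orbitRel x y)
    (h2 : pa.orbitRel y z) : pa.orbitRel x z := by
  obtain ⟨g, hg, rfl⟩ := h1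
  obtain ⟨k, hk, rfl⟩ := h2
  exact ⟨k * g, pa.mem_dom_mul k g x hg hk, pa.act_mul k g x hg hk⟩

theorem class_eq (pa : PartialAction G X) {x y : X} (h : pa.orbitRel x y) :
    {z | pa.orbitRel x z} = {z | pa.orbitRel y z} := by
  ext z
  exact ⟨fun hz => pa.orbitRel_trans (pa.orbitRel_symm h) hz, fun hz => pa.orbitRel_trans h hz⟩

/-- Translation homeomorphism `G^x ≃ₜ G^y` for `y = h · x`. -/
def transHomeo [TopologicalSpace G] [IsTopologicalGroup G] (pa : PartialAction G X) {x y : X}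
    {h : G} (hx : x ∈ pa.dom h) (hy : pa.act h x = y) :
    ↥(pa.stabDom x) ≃ₜ ↥(pa.stabDom y) where
  toFun g := ⟨(g : G) * h⁻¹, by
    have hy' : y ∈ pa.dom h⁻¹ := hy ▸ pa.mem_dom_inv h x hx
    have hxy : pa.act h⁻¹ y = x := by rw [← hy]; exact pa.act_inv_act h x hx
    exact pa.mem_dom_mul (g : G) h⁻¹ y hy' (by rw [hxy]; exact g.2)⟩
  invFun g := ⟨(g : G) * h, pa.mem_dom_mul (g : G) h x hx (by rw [hy]; exact g.2)⟩
  left_inv g := by ext; simp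
  right_inv g := by ext; simp
  continuous_toFun := by
    exact (continuous_subtype_val.mul continuous_const).subtype_mk _
  continuous_invFun := by
    exact (continuous_subtype_val.mul continuous_const).subtype_mk _

theorem transHomeo_act [TopologicalSpace G] [IsTopologicalGroup G] (pa : PartialAction G X)
    {x y : X} {h : G} (hx : x ∈ pa.dom h) (hy : pa.act h x = y) (g : ↥(pa.stabDom x)) :
    pa.act ((pa.transHomeo hx hy g : G)) y = pa.act (g : G) x := by
  have hy' : y ∈ pa.dom h⁻¹ := hy ▸ pa.mem_dom_inv h x hx
  have hxy : pa.act h⁻¹ y = x := by rw [← hy]; exact pa.act_inv_act h x hx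
  have hgx : pa.act h⁻¹ y ∈ pa.dom (g : G) := by rw [hxy]; exact g.2
  show pa.act ((g : G) * h⁻¹) y = _
  rw [pa.act_mul (g : G) h⁻¹ y hy' hgx, hxy]

/-- The localized Vaught `△`-transform of a subset of `X × X`. -/
def delSet [TopologicalSpace G] (pa : PartialAction G X) (A : Set (X × X)) (V : Set G) :
    Set X :=
  {x | ¬ IsMeagre {g : ↥(pa.stabDom x) | (g : G) ∈ V ∧ (x, pa.act (g : G) x) ∈ A}}

end PartialAction

namespace PartialAction

section Main

variable {G X : Type*} [Group G] [TopologicalSpace G] [IsTopologicalGroup G] [PolishSpace G]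
  [TopologicalSpace X] [PolishSpace X] [MeasurableSpace X] [BorelSpace X]
  (pa : PartialAction G X)

theorem baireSpace_stabDom (hGδ : IsGδ {p : G × X | p.2 ∈ pa.dom p.1}) (x : X) :
    BaireSpace ↥(pa.stabDom x) :=
  (show IsGδ (pa.stabDom x) from
    isGδ_preimage' hGδ (continuous_id.prodMk continuous_const)).baireSpace_subtype

theorem continuous_actOn
    (hcont : ContinuousOn (fun p : G × X => pa.act p.1 p.2) {p : G × X | p.2 ∈ pa.dom p.1})
    (x : X) : Continuous (fun g : ↥(pa.stabDom x) => pa.act (g : G) x) :=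
  hcont.comp_continuous (continuous_subtype_val.prodMk continuous_const) fun g => g.2


set_option maxHeartbeats 1000000 in
theorem delSet_measurableSet
    (hdom : ∀ g, IsOpen (pa.dom g))
    (hcont : ContinuousOn (fun p : G × X => pa.act p.1 p.2) {p : G × X | p.2 ∈ pa.dom p.1})
    (hGδ : IsGδ {p : G × X | p.2 ∈ pa.dom p.1})
    {A : Set (X × X)} (hA : MeasurableSet A) {V : Set G} (hV : IsOpen V) :
    MeasurableSet (pa.delSet A V) := by
  letI : MeasurableSpace G := borel G
  haveI : BorelSpace G := ⟨rfl⟩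
  have hBaire : ∀ x : X, BaireSpace ↥(pa.stabDom x) := pa.baireSpace_stabDom hGδ
  have hφ : ∀ x : X, Continuous (fun g : ↥(pa.stabDom x) => pa.act (g : G) x) :=
    pa.continuous_actOn hcont
  revert V
  refine MeasurableSet.induction_on_open
    (C := fun A _ => ∀ {V : Set G}, IsOpen V → MeasurableSet (pa.delSet A V)) ?_ ?_ ?_ _ hA
  · -- open case
    intro U hU V hV
    have heq : pa.delSet U V =
        ⋃ g ∈ V, (pa.dom g ∩ (fun x => (x, pa.act g x)) ⁻¹' U) := by
      ext x
      haveI := hBaire x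
      simp only [delSet, Set.mem_setOf_eq, Set.mem_iUnion, Set.mem_inter_iff,
        Set.mem_preimage]
      constructor
      · intro hnm
        by_contra hcon
        push_neg at hcon
        apply hnm
        have hempty : {g : ↥(pa.stabDom x) | (g : G) ∈ V ∧ (x, pa.act (g : G) x) ∈ U} = ∅ := by
          ext g
          simp only [Set.mem_setOf_eq, Set.mem_empty_iff_false, iff_false, not_and]
          intro hgV hgU
          exact hcon (g : G) hgV g.2 hgU
        rw [hempty]
        exact IsMeagre.empty
      · rintro ⟨g, hgV, hgdom, hgU⟩
        have hopen : IsOpen {t : ↥(pa.stabDom x) | (t : G) ∈ V ∧ (x, pa.act (t : G) x) ∈ U} := by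
          have h1 : IsOpen {t : ↥(pa.stabDom x) | (t : G) ∈ V} :=
            hV.preimage continuous_subtype_val
          have h2 : IsOpen {t : ↥(pa.stabDom x) | (x, pa.act (t : G) x) ∈ U} :=
            hU.preimage (continuous_const.prodMk (hφ x))
          exact h1.inter h2
        exact hopen.not_isMeagre' ⟨⟨g, hgdom⟩, hgV, hgU⟩
    rw [heq]
    refine (isOpen_biUnion fun g _ => ?_).measurableSet
    have : ContinuousOn (fun x : X => (x, pa.act g x)) (pa.dom g) := by
      refine continuousOn_id.prodMk ?_
      exact hcont.comp (Continuous.continuousOn (continuous_const.prodMk continuous_id))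
        fun x hx => hx
    exact this.isOpen_inter_preimage (hdom g) hU
  · -- complement case
    intro A hAm IH V hV
    obtain ⟨B, hBc, -, hBbasis⟩ := TopologicalSpace.exists_countable_basis G
    have key : pa.delSet Aᶜ V =
        ⋃ b ∈ {b ∈ B | b ⊆ V}, ((⋃ g ∈ b, pa.dom g) ∩ (pa.delSet A b)ᶜ) := by
      ext x
      haveI := hBaire x
      simp only [Set.mem_iUnion, Set.mem_inter_iff, Set.mem_sep_iff, Set.mem_compl_iff,
        exists_prop]
      constructor
      · -- forward: Baire property argument
        intro hx
        have hx' : ¬ IsMeagre ({g : ↥(pa.stabDom x) | (g : G) ∈ V} \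
            {g : ↥(pa.stabDom x) | (x, pa.act (g : G) x) ∈ A}) := by
          intro hm
          exact hx (hm.mono (t := {g : ↥(pa.stabDom x) | (g : G) ∈ V ∧ (x, pa.act (g : G) x) ∈ Aᶜ})
            fun g hg => by exact ⟨hg.1, hg.2⟩)
        have hSA : MeasurableSet {g : ↥(pa.stabDom x) | (x, pa.act (g : G) x) ∈ A} :=
          hAm.preimage ((continuous_const.prodMk (hφ x)).measurable)
        have hC : BaireMeasurableSet ({g : ↥(pa.stabDom x) | (g : G) ∈ V} \
            {g : ↥(pa.stabDom x) | (x, pa.act (g : G) x) ∈ A}) :=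
          ((hV.preimage continuous_subtype_val).baireMeasurableSet).diff
            hSA.baireMeasurableSet
        obtain ⟨O', hO'open, hOeq⟩ := hC.residualEq_isOpen
        have hres : {g : ↥(pa.stabDom x) |
            (g ∈ ({g : ↥(pa.stabDom x) | (g : G) ∈ V} \
              {g : ↥(pa.stabDom x) | (x, pa.act (g : G) x) ∈ A})) ↔ g ∈ O'} ∈
            residual ↥(pa.stabDom x) := Filter.eventuallyEq_set.1 hOeq
        set Cset := {g : ↥(pa.stabDom x) | (g : G) ∈ V} \
            {g : ↥(pa.stabDom x) | (x, pa.act (g : G) x) ∈ A} with hCdef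
        have hMeagDiff : IsMeagre {g : ↥(pa.stabDom x) | ¬ (g ∈ Cset ↔ g ∈ O')} := by
          rw [IsMeagre]
          convert hres using 1
          ext g
          simp [not_not]
        -- O' meets {↑g ∈ V}
        have hO'V : (O' ∩ {g : ↥(pa.stabDom x) | (g : G) ∈ V}).Nonempty := by
          by_contra hne
          rw [Set.not_nonempty_iff_eq_empty] at hne
          apply hx'
          have hsub : Cset ⊆ {g : ↥(pa.stabDom x) | ¬ (g ∈ Cset ↔ g ∈ O')} := by
            intro g hg
            simp only [Set.mem_setOf_eq]
            intro hiff
            have hgO : g ∈ O' := hiff.1 hg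
            have : g ∈ O' ∩ {g : ↥(pa.stabDom x) | (g : G) ∈ V} := ⟨hgO, hg.1⟩
            rw [hne] at this
            exact this
          exact hMeagDiff.mono hsub
        obtain ⟨t₀, ht₀O, ht₀V⟩ := hO'V
        obtain ⟨O, hOopen, hOpre⟩ := isOpen_induced_iff.1 hO'open
        have ht₀OV : (t₀ : G) ∈ O ∩ V := by
          constructor
          · rw [← hOpre] at ht₀O; exact ht₀O
          · exact ht₀V
        obtain ⟨b, hbB, ht₀b, hbsub⟩ :=
          hBbasis.exists_subset_of_mem_open ht₀OV (hOopen.inter hV)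
        refine ⟨b, ⟨hbB, fun g hg => (hbsub hg).2⟩, ?_, ?_⟩
        · exact ⟨t₀, ht₀b, t₀.2⟩
        · -- x ∉ delSet A b : IsMeagre
          refine not_not_intro (hMeagDiff.mono ?_)
          intro g hg
          simp only [Set.mem_setOf_eq]
          intro hiff
          have hgb : (g : G) ∈ b := hg.1
          have hgO' : g ∈ O' := by
            rw [← hOpre]
            exact (hbsub hgb).1
          have hgC : g ∈ Cset := hiff.2 hgO'
          exact hgC.2 hg.2
      · -- backward
        rintro ⟨b, ⟨hbB, hbV⟩, hxdom, hmeag⟩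
        simp only [delSet, Set.mem_setOf_eq, not_not] at hmeag
        intro hmeagV
        obtain ⟨g₀, hg₀b, hg₀dom⟩ := hxdom
        have hbT : IsOpen {g : ↥(pa.stabDom x) | (g : G) ∈ b} :=
          (hBbasis.isOpen hbB).preimage continuous_subtype_val
        have hsub : {g : ↥(pa.stabDom x) | (g : G) ∈ b} ⊆
            {g : ↥(pa.stabDom x) | (g : G) ∈ b ∧ (x, pa.act (g : G) x) ∈ A} ∪
            {g : ↥(pa.stabDom x) | (g : G) ∈ V ∧ (x, pa.act (g : G) x) ∈ Aᶜ} := by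
          intro g hg
          by_cases hgA : (x, pa.act (g : G) x) ∈ A
          · exact Or.inl ⟨hg, hgA⟩
          · exact Or.inr ⟨hbV hg, hgA⟩
        exact hbT.not_isMeagre' ⟨⟨g₀, hg₀dom⟩, hg₀b⟩
          ((hmeag.union' hmeagV).mono hsub)
    rw [key]
    refine MeasurableSet.biUnion (hBc.mono (Set.sep_subset _ _)) fun b hb => ?_
    exact ((isOpen_biUnion fun g _ => hdom g).measurableSet).inter
      (IH (hBbasis.isOpen hb.1)).compl
  · -- countable union case
    intro f _ _ hC V hV
    have heq : pa.delSet (⋃ i, f i) V = ⋃ i, pa.delSet (f i) V := by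
      ext x
      simp only [delSet, Set.mem_setOf_eq, Set.mem_iUnion]
      have hseteq : {g : ↥(pa.stabDom x) | (g : G) ∈ V ∧ ∃ i, (x, pa.act (g : G) x) ∈ f i} =
          ⋃ i, {g : ↥(pa.stabDom x) | (g : G) ∈ V ∧ (x, pa.act (g : G) x) ∈ f i} := by
        ext g
        simp only [Set.mem_setOf_eq, Set.mem_iUnion]
        exact ⟨fun ⟨h1, i, h2⟩ => ⟨i, h1, h2⟩, fun ⟨i, h1, h2⟩ => ⟨h1, i, h2⟩⟩
      rw [hseteq]
      constructor
      · intro h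
        by_contra hall
        push_neg at hall
        exact h (isMeagre_iUnion hall)
      · rintro ⟨i, hi⟩ h
        exact hi (h.mono (Set.subset_iUnion
          (fun i => {g : ↥(pa.stabDom x) | (g : G) ∈ V ∧ (x, pa.act (g : G) x) ∈ f i}) i))
    rw [heq]
    exact MeasurableSet.iUnion fun i => hC i hV


theorem isMeagre_act_iff (hxy : pa.orbitRel x' y') (S : Set X) :
    IsMeagre {g : ↥(pa.stabDom x') | pa.act (g : G) x' ∈ S} ↔
      IsMeagre {g : ↥(pa.stabDom y') | pa.act (g : G) y' ∈ S} := by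
  obtain ⟨h, hx, hy⟩ := hxy
  have heq : {g : ↥(pa.stabDom x') | pa.act (g : G) x' ∈ S} =
      (pa.transHomeo hx hy) ⁻¹' {g : ↥(pa.stabDom y') | pa.act (g : G) y' ∈ S} := by
    ext g
    simp only [Set.mem_setOf_eq, Set.mem_preimage]
    rw [pa.transHomeo_act hx hy g]
  rw [heq, (pa.transHomeo hx hy).isMeagre_preimage]

end Main

end PartialAction

/-- the orbit equivalence relation `E^p_G` of a continuous partial action of
a Polish group on a Polish space (with `G*X` a `G_δ` set) is idealistic: one can assign to
each orbit `[x]` a σ-ideal `I x` of subsets of `[x]` (depending only on the class), with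
`[x] ∉ I x`, such that for every Borel `A ⊆ X × X` the set
`{x : {y ∈ [x] : (x,y) ∈ A} ∈ I [x]}` is Borel. -/
theorem orbitRel_idealistic {G X : Type*} [Group G] [TopologicalSpace G] [IsTopologicalGroup G]
    [PolishSpace G] [TopologicalSpace X] [PolishSpace X]
    [MeasurableSpace X] [BorelSpace X]
    (pa : PartialAction G X)
    (hdom : ∀ g, IsOpen (pa.dom g))
    (hcont : ContinuousOn (fun p : G × X => pa.act p.1 p.2) {p : G × X | p.2 ∈ pa.dom p.1})
    (hGδ : IsGδ {p : G × X | p.2 ∈ pa.dom p.1}) :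
    ∃ I : X → Set (Set X),
      -- the ideal depends only on the equivalence class
      (∀ x y, pa.orbitRel x y → I x = I y) ∧
      -- `I x` is a σ-ideal of subsets of the class `[x] = {y | x E^p_G y}`
      (∀ x, ∀ S ∈ I x, S ⊆ {y | pa.orbitRel x y}) ∧
      (∀ x, (∅ : Set X) ∈ I x) ∧
      (∀ x, ∀ S ∈ I x, ∀ T ⊆ S, T ∈ I x) ∧
      (∀ x, ∀ f : ℕ → Set X, (∀ n, f n ∈ I x) → (⋃ n, f n) ∈ I x) ∧
      -- the class itself is not in the ideal
      (∀ x, {y | pa.orbitRel x y} ∉ I x) ∧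
      -- for every Borel `A ⊆ X × X`, the set `A_I` is Borel
      (∀ A : Set (X × X), MeasurableSet A →
        MeasurableSet {x : X | {y | pa.orbitRel x y ∧ (x, y) ∈ A} ∈ I x}) := by
  have hBaire : ∀ x : X, BaireSpace ↥(pa.stabDom x) := pa.baireSpace_stabDom hGδ
  refine ⟨fun x => {S | S ⊆ {y | pa.orbitRel x y} ∧
      IsMeagre {g : ↥(pa.stabDom x) | pa.act (g : G) x ∈ S}}, ?_, ?_, ?_, ?_, ?_, ?_, ?_⟩
  · intro x y hxy
    ext S
    simp only [Set.mem_setOf_eq]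
    rw [pa.class_eq hxy, pa.isMeagre_act_iff hxy]
  · intro x S hS
    exact hS.1
  · intro x
    refine ⟨Set.empty_subset _, ?_⟩
    have hempty : {g : ↥(pa.stabDom x) | pa.act (g : G) x ∈ (∅ : Set X)} = ∅ := by
      ext g; simp
    rw [hempty]
    exact IsMeagre.empty
  · intro x S hS T hTS
    exact ⟨hTS.trans hS.1, hS.2.mono fun g hg => hTS hg⟩
  · intro x f hf
    refine ⟨Set.iUnion_subset fun n => (hf n).1, ?_⟩
    have hseteq : {g : ↥(pa.stabDom x) | pa.act (g : G) x ∈ ⋃ n, f n} =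
        ⋃ n, {g : ↥(pa.stabDom x) | pa.act (g : G) x ∈ f n} := by
      ext g; simp
    rw [hseteq]
    exact isMeagre_iUnion fun n => (hf n).2
  · intro x hx
    haveI := hBaire x
    have huniv : {g : ↥(pa.stabDom x) | pa.act (g : G) x ∈ {y | pa.orbitRel x y}} =
        Set.univ := by
      ext g
      simp only [Set.mem_setOf_eq, Set.mem_univ, iff_true]
      exact ⟨(g : G), g.2, rfl⟩
    have hm := hx.2
    rw [huniv] at hm
    exact isOpen_univ.not_isMeagre' ⟨⟨1, pa.mem_dom_one x⟩, Set.mem_univ _⟩ hm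
  · intro A hA
    have hkey : {x : X | {y | pa.orbitRel x y ∧ (x, y) ∈ A} ∈
        {S | S ⊆ {y | pa.orbitRel x y} ∧
          IsMeagre {g : ↥(pa.stabDom x) | pa.act (g : G) x ∈ S}}} =
        (pa.delSet A Set.univ)ᶜ := by
      ext x
      simp only [Set.mem_setOf_eq, Set.mem_compl_iff, PartialAction.delSet, not_not]
      have hseteq : {g : ↥(pa.stabDom x) |
          pa.orbitRel x (pa.act (g : G) x) ∧ (x, pa.act (g : G) x) ∈ A} =
          {g : ↥(pa.stabDom x) | (g : G) ∈ (Set.univ : Set G) ∧ (x, pa.act (g : G) x) ∈ A} := by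
        ext g
        simp only [Set.mem_setOf_eq, Set.mem_univ, true_and]
        exact ⟨fun hb => hb.2, fun h2 => ⟨⟨(g : G), g.2, rfl⟩, h2⟩⟩
      constructor
      · rintro ⟨-, h2⟩
        rw [← hseteq]
        exact h2
      · intro hm
        refine ⟨fun y hy => hy.1, ?_⟩
        rw [hseteq]
        exact hm
    rw [hkey]
    exact (pa.delSet_measurableSet hdom hcont hGδ hA isOpen_univ).compl
end

section
/- Let m be a continuous topological partial action of a Polish group G on a Polish space X. For any (g,x) ∈ G × X, the orbit of (g,x) under the partial action \widehat{m}_u(h,y) = (h u⁻¹, u·y) on G × X is homeomorphic to G^x via the map ρ(h) = (hg, h·x), whose inverse is (j,y) ↦ j g⁻¹; in particular, if G*X is G_δ, each \widehat{m}-orbit is a G_δ subset of G × X. -/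

private lemma isGδ_of_isClosed_polish {α : Type*} [TopologicalSpace α] [PolishSpace α]
    {s : Set α} (h : IsClosed s) : IsGδ s := by
  letI := TopologicalSpace.upgradeIsCompletelyMetrizable α
  exact h.isGδ

private lemma isGδ_preimage_aux {α β : Type*} [TopologicalSpace α] [TopologicalSpace β]
    {s : Set β} (hs : IsGδ s) {f : α → β} (hf : Continuous f) : IsGδ (f ⁻¹' s) := by
  rw [isGδ_iff_eq_iInter_nat] at hs ⊢
  obtain ⟨t, ht, rfl⟩ := hs
  exact ⟨fun n => f ⁻¹' t n, fun n => (ht n).preimage hf, by simp [Set.preimage_iInter]⟩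

/-- for a continuous partial action of a Polish group on a Polish space,
the orbit of `(g,x)` under the partial action `\widehat m_u (h,y) = (h u⁻¹, u · y)` on
`G × X` is homeomorphic to `G^x` via `ρ(h) = \widehat m_h (g, x) = (g h⁻¹, h · x)`
(in the paper's notation, with inverse recovering `h` from the first coordinate);
in particular, if `G*X` is `G_δ`, every `\widehat m`-orbit is a `G_δ` subset of `G × X`. -/
theorem hat_orbit_homeomorph {G X : Type*} [Group G] [TopologicalSpace G]
    [IsTopologicalGroup G] [PolishSpace G] [TopologicalSpace X] [PolishSpace X]
    (pa : PartialAction G X)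
    (hdom : ∀ g, IsOpen (pa.dom g))
    (hcont : ContinuousOn (fun p : G × X => pa.act p.1 p.2) {p : G × X | p.2 ∈ pa.dom p.1})
    (g : G) (x : X) :
    (∃ e : ↥(pa.stabDom x) ≃ₜ ↥{p : G × X | pa.hatOrbitRel (g, x) p},
      (∀ h : ↥(pa.stabDom x), (e h : G × X) = (g * (h : G)⁻¹, pa.act (h : G) x)) ∧
      (∀ p : ↥{p : G × X | pa.hatOrbitRel (g, x) p},
        ((e.symm p : G) = (p : G × X).1⁻¹ * g))) ∧
    (IsGδ {p : G × X | p.2 ∈ pa.dom p.1} →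
      ∀ q : G × X, IsGδ {p : G × X | pa.hatOrbitRel q p}) := by
  constructor
  · -- the homeomorphism
    have mem_orbit : ∀ h : ↥(pa.stabDom x),
        (g * (h : G)⁻¹, pa.act (h : G) x) ∈ {p : G × X | pa.hatOrbitRel (g, x) p} :=
      fun h => ⟨(h : G), h.2, rfl⟩
    have hmem : ∀ p : ↥{p : G × X | pa.hatOrbitRel (g, x) p},
        (p : G × X).1⁻¹ * g ∈ pa.stabDom x := by
      rintro ⟨p, u, hu, rfl⟩
      have h1 : (g * u⁻¹)⁻¹ * g = u := by group
      show x ∈ pa.dom _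
      simpa [h1] using hu
    have contact : Continuous (fun h : ↥(pa.stabDom x) => pa.act (h : G) x) := by
      have hc : Continuous (fun h : ↥(pa.stabDom x) => (((h : G), x) : G × X)) :=
        continuous_subtype_val.prodMk continuous_const
      exact hcont.comp_continuous hc (fun h => h.2)
    refine ⟨{ toFun := fun h => ⟨(g * (h : G)⁻¹, pa.act (h : G) x), mem_orbit h⟩
              invFun := fun p => ⟨(p : G × X).1⁻¹ * g, hmem p⟩
              left_inv := ?_
              right_inv := ?_
              continuous_toFun := ?_
              continuous_invFun := ?_ }, fun h => rfl, fun p => rfl⟩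
    · intro h
      apply Subtype.ext
      show (g * (h : G)⁻¹)⁻¹ * g = (h : G)
      group
    · rintro ⟨p, u, hu, rfl⟩
      apply Subtype.ext
      have h1 : (g * u⁻¹)⁻¹ * g = u := by group
      show (g * ((g * u⁻¹)⁻¹ * g)⁻¹, pa.act ((g * u⁻¹)⁻¹ * g) x) = (g * u⁻¹, pa.act u x)
      rw [h1]
    · exact Continuous.subtype_mk
        ((continuous_const.mul continuous_subtype_val.inv).prodMk contact) _
    · exact Continuous.subtype_mk
        ((continuous_fst.comp continuous_subtype_val).inv.mul continuous_const) _
  · -- the Gδ statement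
    intro hD q
    obtain ⟨a, y⟩ := q
    set A : Set (G × X) := (fun p : G × X => ((p.1⁻¹ * a, y) : G × X)) ⁻¹'
      {p : G × X | p.2 ∈ pa.dom p.1} with hAdef
    have hA : IsGδ A := isGδ_preimage_aux hD
      ((continuous_fst.inv.mul continuous_const).prodMk continuous_const)
    have hmemA : ∀ p : G × X, p ∈ A ↔ y ∈ pa.dom (p.1⁻¹ * a) := fun p => Iff.rfl
    have contF : Continuous (fun p : ↥A => pa.act ((p : G × X).1⁻¹ * a) y) := by
      have hc : Continuous (fun p : ↥A => ((((p : G × X).1⁻¹ * a, y)) : G × X)) :=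
        (((continuous_fst.comp continuous_subtype_val).inv.mul
          continuous_const).prodMk continuous_const)
      exact hcont.comp_continuous hc (fun p => p.2)
    have hT : IsClosed {p : ↥A | pa.act ((p : G × X).1⁻¹ * a) y = (p : G × X).2} :=
      isClosed_eq contF (continuous_snd.comp continuous_subtype_val)
    obtain ⟨C, hC, hCT⟩ := isClosed_induced_iff.mp hT
    have horb : {p : G × X | pa.hatOrbitRel (a, y) p} = A ∩ C := by
      ext p
      constructor
      · rintro ⟨u, hu, rfl⟩
        have h1 : (a * u⁻¹)⁻¹ * a = u := by group
        have hpA : (a * u⁻¹, pa.act u y) ∈ A := by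
          rw [hmemA]
          show y ∈ pa.dom ((a * u⁻¹)⁻¹ * a)
          rw [h1]; exact hu
        refine ⟨hpA, ?_⟩
        have : (⟨(a * u⁻¹, pa.act u y), hpA⟩ : ↥A) ∈ Subtype.val ⁻¹' C := by
          rw [hCT]
          show pa.act ((a * u⁻¹)⁻¹ * a) y = pa.act u y
          rw [h1]
        exact this
      · rintro ⟨hpA, hpC⟩
        have hTmem : (⟨p, hpA⟩ : ↥A) ∈
            {p : ↥A | pa.act ((p : G × X).1⁻¹ * a) y = (p : G × X).2} := by
          rw [← hCT]; exact hpC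
        refine ⟨p.1⁻¹ * a, hpA, ?_⟩
        have h2 : p.2 = pa.act (p.1⁻¹ * a) y := hTmem.symm
        have h3 : a * (p.1⁻¹ * a)⁻¹ = p.1 := by group
        exact Prod.ext h3.symm h2
    rw [horb]
    exact hA.inter (isGδ_of_isClosed_polish hC)
end
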